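/- Assume: φ ∈ C([0,∞)) ∩ C¹((0,∞)) with φ(0) = 0, φ > 0 and φ' > 0 on (0,∞); l ∈ C([0,∞)) with l > 0 on (0,∞) and s ↦ s·φ'(s)/l(s) integrable on (0,1); f ∈ C(ℝ) with f(0)·l(0) = 0, f ≥ 0 and C-increasing on (0,η₀) for some η₀ > 0 and C ≥ 1. Let T > 0, ℘ ∈ C¹([0,T]) with ℘ > 0 and ℘ monotone on [0,T] (either ℘' ≥ 0 everywhere or ℘' ≤ 0 everywhere), and a ∈ C([0,T]) with a > 0. Suppose that either (i) f ≡ 0 on (0,η₀), or (ii) f > 0 on (0,η₀), l is C-increasing on (0,ξ₀) for some ξ₀ > 0, and ∫₀^ε ds/K⁻¹(F(s)) = ∞ for every small ε > 0, where K(t) = ∫₀^t s·φ'(s)/l(s) ds and F(t) = ∫₀^t f(s) ds. Let η ∈ (0,η₀) and let w ∈ C¹([0,T]) satisfy: w(0) = 0, w(T) = η, 0 ≤ w ≤ η and w' ≥ 0 on [0,T], and t ↦ ℘(t)·φ(w'(t)) differentiable on (0,T) with derivative ℘(t)·a(t)·f(w(t))·l(|w'(t)|). Then w'(0) > 0; consequently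 w > 0 on (0,T] and w' > 0 on [0,T]. -/

import Mathlib

open Set MeasureTheory Filter Topology
open scoped ENNReal NNReal

/-- Given `C ≥ 1`, a function `h` is `C`-increasing on `I` if
`sup {h s : s ∈ I, s ≤ t} ≤ C * h t` for every `t ∈ I`. -/
def CIncreasingOn (C : ℝ) (h : ℝ → ℝ) (I : Set ℝ) : Prop :=
  ∀ s ∈ I, ∀ t ∈ I, s ≤ t → h s ≤ C * h t

private lemma aux_lim_le {l : ℝ → ℝ} (hlc : ContinuousWithinAt l (Ici 0) 0) {c x : ℝ}
    (hx : 0 < x) (h : ∀ u, 0 < u → u < x → l u ≤ c) : l 0 ≤ c := by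
  have hne : (𝓝[>] (0:ℝ)).NeBot := nhdsGT_neBot 0
  refine le_of_tendsto (hlc.tendsto.mono_left (nhdsWithin_mono 0 Ioi_subset_Ici_self)) ?_
  have h2 : ∀ᶠ u in 𝓝[>] (0:ℝ), u < x :=
    eventually_nhdsWithin_of_eventually_nhds
      (eventually_iff_exists_mem.mpr ⟨Iio x, Iio_mem_nhds hx, fun u hu => hu⟩)
  filter_upwards [self_mem_nhdsWithin, h2] with u hu hux
  exact h u hu hux

private lemma aux_lim_ge {l : ℝ → ℝ} (hlc : ContinuousWithinAt l (Ici 0) 0) {c x : ℝ}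
    (hx : 0 < x) (h : ∀ u, 0 < u → u < x → c ≤ l u) : c ≤ l 0 := by
  have hne : (𝓝[>] (0:ℝ)).NeBot := nhdsGT_neBot 0
  refine ge_of_tendsto (hlc.tendsto.mono_left (nhdsWithin_mono 0 Ioi_subset_Ici_self)) ?_
  have h2 : ∀ᶠ u in 𝓝[>] (0:ℝ), u < x :=
    eventually_nhdsWithin_of_eventually_nhds
      (eventually_iff_exists_mem.mpr ⟨Iio x, Iio_mem_nhds hx, fun u hu => hu⟩)
  filter_upwards [self_mem_nhdsWithin, h2] with u hu hux
  exact h u hu hux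

private lemma aux_derivWithin_unique {w : ℝ → ℝ} {s : Set ℝ} {g₁ g₂ : ℝ} {t : ℝ}
    (hs : UniqueDiffWithinAt ℝ s t) (h1 : HasDerivWithinAt w g₁ s t)
    (h2 : HasDerivWithinAt w g₂ s t) : g₁ = g₂ := by
  rw [← h1.derivWithin hs, ← h2.derivWithin hs]

private lemma aux_deriv_zero_of_const {w : ℝ → ℝ} {s : Set ℝ} {α β t c g : ℝ}
    (hαβ : α < β) (ht : t ∈ Icc α β) (hsub : Icc α β ⊆ s)
    (hwd : HasDerivWithinAt w g s t) (hconst : ∀ u ∈ Icc α β, w u = c) : g = 0 :=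
  aux_derivWithin_unique ((uniqueDiffOn_Icc hαβ) t ht) (hwd.mono hsub)
    ((hasDerivWithinAt_const t _ c).congr hconst (hconst t ht))

private lemma aux_image_null {w : ℝ → ℝ} {Z : Set ℝ}
    (hZ : ∀ t ∈ Z, HasDerivWithinAt w 0 Z t) : volume (w '' Z) = 0 := by
  refine addHaar_image_eq_zero_of_det_fderivWithin_eq_zero volume
    (f' := fun _ => ContinuousLinearMap.smulRight (1 : ℝ →L[ℝ] ℝ) (0:ℝ))
    (fun t ht => (hZ t ht).hasFDerivWithinAt) (fun t _ => ?_)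
  simp [ContinuousLinearMap.smulRight_one_eq_toSpanSingleton, ContinuousLinearMap.det_toSpanSingleton]

private lemma aux_lintegral_image {s : Set ℝ} {w g : ℝ → ℝ} (hs : MeasurableSet s)
    (hw : ∀ t ∈ s, HasDerivWithinAt w (g t) s t) (hinj : InjOn w s) (G : ℝ → ℝ≥0∞) :
    ∫⁻ x in w '' s, G x = ∫⁻ t in s, ENNReal.ofReal |g t| * G (w t) := by
  have := lintegral_image_eq_lintegral_abs_det_fderiv_mul volume hs
    (f' := fun t => ContinuousLinearMap.smulRight (1 : ℝ →L[ℝ] ℝ) (g t))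
    (fun t ht => (hw t ht).hasFDerivWithinAt) hinj G
  simpa [ContinuousLinearMap.smulRight_one_eq_toSpanSingleton, ContinuousLinearMap.det_toSpanSingleton] using this

private lemma aux_kinv (K : ℝ → ℝ) (hKc : ContinuousOn K (Icc 0 1))
    (hKm : StrictMonoOn K (Icc 0 1)) (hK0 : K 0 = 0) :
    ∃ ki : ℝ → ℝ, Monotone ki ∧ (∀ x ∈ Icc (0:ℝ) 1, ki (K x) = x) ∧
      (∀ y, 0 ≤ y → y ≤ K 1 → ki y ∈ Icc (0:ℝ) 1 ∧ K (ki y) = y) := by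
  classical
  set S : ℝ → Set ℝ := fun y => {x | x ∈ Icc (0:ℝ) 1 ∧ K x ≤ y} with hS
  have hsub : ∀ y, S y ⊆ Icc 0 1 := fun y x hx => hx.1
  have hbdd : ∀ y, BddAbove (S y) := fun y => bddAbove_Icc.mono (hsub y)
  have hmem0 : ∀ y, 0 ≤ y → (0:ℝ) ∈ S y := fun y hy =>
    ⟨left_mem_Icc.2 zero_le_one, by rw [hK0]; exact hy⟩
  have hKnn : ∀ x ∈ Icc (0:ℝ) 1, 0 ≤ K x := by
    intro x hx
    rcases eq_or_lt_of_le hx.1 with h | h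
    · rw [← h, hK0]
    · rw [← hK0]; exact (hKm (left_mem_Icc.2 zero_le_one) hx h).le
  have hemptyneg : ∀ y, y < 0 → S y = ∅ := by
    intro y hy
    rw [eq_empty_iff_forall_notMem]
    rintro x ⟨hx1, hx2⟩
    exact absurd (le_trans (hKnn x hx1) hx2) (not_le.2 hy)
  refine ⟨fun y => sSup (S y), ?_, ?_, ?_⟩
  · intro y y' hyy'
    by_cases hne : (S y).Nonempty
    · exact csSup_le_csSup (hbdd y') hne (fun x hx => ⟨hx.1, hx.2.trans hyy'⟩)
    · simp only [not_nonempty_iff_eq_empty.mp hne, Real.sSup_empty]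
      by_cases h0 : 0 ≤ y'
      · exact le_csSup (hbdd y') (hmem0 y' h0)
      · rw [hemptyneg y' (not_le.1 h0), Real.sSup_empty]
  · intro x hx
    refine IsGreatest.csSup_eq ⟨⟨hx, le_rfl⟩, ?_⟩
    intro z hz
    by_contra hzx
    exact absurd hz.2 (not_le.2 (hKm hx hz.1 (not_le.1 hzx)))
  · intro y hy0 hy1
    have hclosed : IsClosed (S y) := by
      have h1 : S y = Icc 0 1 ∩ K ⁻¹' (Iic y) := rfl
      rw [h1]
      exact hKc.preimage_isClosed_of_isClosed isClosed_Icc isClosed_Iic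
    have hcs := hclosed.csSup_mem ⟨0, hmem0 y hy0⟩ (hbdd y)
    refine ⟨hcs.1, ?_⟩
    rcases eq_or_lt_of_le hcs.2 with h | h
    · exact h
    · exfalso
      obtain ⟨x', hx'mem, hKx'⟩ := intermediate_value_Icc hcs.1.2
        (hKc.mono (Icc_subset_Icc hcs.1.1 le_rfl)) ⟨h.le, hy1⟩
      have hle : x' ≤ sSup (S y) :=
        le_csSup (hbdd y) ⟨⟨hcs.1.1.trans hx'mem.1, hx'mem.2⟩, hKx'.le⟩
      have hx'eq : x' = sSup (S y) := le_antisymm hle hx'mem.1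
      rw [← hx'eq, hKx'] at h
      exact lt_irrefl y h

set_option maxHeartbeats 2000000 in
/-- Proposition 3.7: if either `f ≡ 0` near `0`, or `f > 0` and the
Keller–Osserman condition at zero fails, then any solution of the two-point
problem `[℘ φ(w')]' = ℘ a f(w) l(|w'|)`, `w(0)=0`, `w(T)=η`, has `w'(0) > 0`;
consequently `w > 0` on `(0,T]` and `w' > 0` on `[0,T]`. -/
theorem stmt_5
    (φ φ' l : ℝ → ℝ)
    (hφc : ContinuousOn φ (Ici 0)) (hφ0 : φ 0 = 0)
    (hφpos : ∀ t : ℝ, 0 < t → 0 < φ t)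
    (hφd : ∀ t : ℝ, 0 < t → HasDerivAt φ (φ' t) t)
    (hφ'c : ContinuousOn φ' (Ioi 0))
    (hφ'pos : ∀ t : ℝ, 0 < t → 0 < φ' t)
    (hlc : ContinuousOn l (Ici 0)) (hlpos : ∀ t : ℝ, 0 < t → 0 < l t)
    (hint : IntegrableOn (fun s => s * φ' s / l s) (Ioo 0 1))
    (C η₀ : ℝ) (hC : 1 ≤ C) (hη₀ : 0 < η₀)
    (f : ℝ → ℝ) (hfc : Continuous f) (hfl0 : f 0 * l 0 = 0)
    (hfnn : ∀ t ∈ Ioo (0:ℝ) η₀, 0 ≤ f t)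
    (hfCinc : CIncreasingOn C f (Ioo 0 η₀))
    (T : ℝ) (hT : 0 < T)
    (p p' : ℝ → ℝ)
    (hpd : ∀ t ∈ Icc (0:ℝ) T, HasDerivWithinAt p (p' t) (Icc 0 T) t)
    (hp'c : ContinuousOn p' (Icc (0:ℝ) T))
    (hppos : ∀ t ∈ Icc (0:ℝ) T, 0 < p t)
    (hpmono : (∀ t ∈ Icc (0:ℝ) T, 0 ≤ p' t) ∨ (∀ t ∈ Icc (0:ℝ) T, p' t ≤ 0))
    (a : ℝ → ℝ) (hac : ContinuousOn a (Icc (0:ℝ) T))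
    (hapos : ∀ t ∈ Icc (0:ℝ) T, 0 < a t)
    (F K Kinv : ℝ → ℝ)
    (hF : ∀ t, F t = ∫ s in (0:ℝ)..t, f s)
    (hK : ∀ t, K t = ∫ s in (0:ℝ)..t, s * φ' s / l s)
    (hKinv : ∀ t : ℝ, 0 ≤ t → Kinv (K t) = t)
    (ξ₀ : ℝ)
    (hcase :
      (∀ t ∈ Ioo (0:ℝ) η₀, f t = 0) ∨
      ((∀ t ∈ Ioo (0:ℝ) η₀, 0 < f t) ∧ 0 < ξ₀ ∧ CIncreasingOn C l (Ioo 0 ξ₀) ∧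
        ∀ ε ∈ Ioo (0:ℝ) η₀,
          ¬ IntegrableOn (fun s => 1 / Kinv (F s)) (Ioo 0 ε)))
    (η : ℝ) (hη : η ∈ Ioo (0:ℝ) η₀)
    (w w' : ℝ → ℝ)
    (hwd : ∀ t ∈ Icc (0:ℝ) T, HasDerivWithinAt w (w' t) (Icc 0 T) t)
    (hw'c : ContinuousOn w' (Icc (0:ℝ) T))
    (hw0 : w 0 = 0) (hwT : w T = η)
    (hwrange : ∀ t ∈ Icc (0:ℝ) T, 0 ≤ w t ∧ w t ≤ η ∧ 0 ≤ w' t)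
    (hODE : ∀ t ∈ Ioo (0:ℝ) T,
      HasDerivAt (fun s => p s * φ (w' s)) (p t * a t * f (w t) * l |w' t|) t) :
    0 < w' 0 ∧ (∀ t ∈ Ioc (0:ℝ) T, 0 < w t) ∧ (∀ t ∈ Icc (0:ℝ) T, 0 < w' t) := by
  obtain ⟨hη0, hηη₀⟩ := hη
  have hT0 : (0:ℝ) ≤ T := hT.le
  have h0T : (0:ℝ) ∈ Icc 0 T := ⟨le_rfl, hT0⟩
  have hTT : T ∈ Icc (0:ℝ) T := ⟨hT0, le_rfl⟩
  have hwc : ContinuousOn w (Icc 0 T) := fun t ht => (hwd t ht).continuousWithinAt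
  have hpc : ContinuousOn p (Icc 0 T) := fun t ht => (hpd t ht).continuousWithinAt
  have hgnn : ∀ t ∈ Icc (0:ℝ) T, 0 ≤ w' t := fun t ht => (hwrange t ht).2.2
  have hwnn : ∀ t ∈ Icc (0:ℝ) T, 0 ≤ w t := fun t ht => (hwrange t ht).1
  have hwle : ∀ t ∈ Icc (0:ℝ) T, w t ≤ η := fun t ht => (hwrange t ht).2.1
  have hφnn : ∀ x : ℝ, 0 ≤ x → 0 ≤ φ x := by
    intro x hx; rcases eq_or_lt_of_le hx with h | h
    · rw [← h, hφ0]
    · exact (hφpos x h).le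
  have hφzero : ∀ x : ℝ, 0 ≤ x → φ x = 0 → x = 0 := by
    intro x hx h; rcases eq_or_lt_of_le hx with h' | h'
    · exact h'.symm
    · exact absurd h (ne_of_gt (hφpos x h'))
  have hlnn : ∀ x : ℝ, 0 ≤ x → 0 ≤ l x := by
    intro x hx; rcases eq_or_lt_of_le hx with h | h
    · rw [← h]
      exact aux_lim_ge (hlc 0 self_mem_Ici) one_pos (fun u hu _ => (hlpos u hu).le)
    · exact (hlpos x h).le
  have hf0nn : 0 ≤ f 0 :=
    aux_lim_ge hfc.continuousAt.continuousWithinAt hη₀ (fun u hu hu' => hfnn u ⟨hu, hu'⟩)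
  have hfwnn : ∀ t ∈ Icc (0:ℝ) T, 0 ≤ f (w t) := by
    intro t ht
    rcases eq_or_lt_of_le (hwnn t ht) with h | h
    · rw [← h]; exact hf0nn
    · exact hfnn _ ⟨h, lt_of_le_of_lt (hwle t ht) hηη₀⟩
  set E : ℝ → ℝ := fun t => p t * φ (w' t) with hEdef
  have hEc : ContinuousOn E (Icc 0 T) :=
    hpc.mul (hφc.comp hw'c (fun t ht => hgnn t ht))
  have hEd : ∀ t ∈ Ioo (0:ℝ) T, HasDerivAt E (p t * a t * f (w t) * l (w' t)) t := by
    intro t ht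
    have h := hODE t ht
    rwa [abs_of_nonneg (hgnn t (Ioo_subset_Icc_self ht))] at h
  have hE'nn : ∀ t ∈ Ioo (0:ℝ) T, 0 ≤ p t * a t * f (w t) * l (w' t) := by
    intro t ht
    have ht' := Ioo_subset_Icc_self ht
    exact mul_nonneg (mul_nonneg (mul_nonneg (hppos t ht').le (hapos t ht').le)
      (hfwnn t ht')) (hlnn _ (hgnn t ht'))
  have hEmono : MonotoneOn E (Icc 0 T) := by
    refine monotoneOn_of_deriv_nonneg (convex_Icc 0 T) hEc ?_ ?_
    · intro t ht
      rw [interior_Icc] at ht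
      exact (hEd t ht).differentiableAt.differentiableWithinAt
    · intro t ht
      rw [interior_Icc] at ht
      rw [(hEd t ht).deriv]
      exact hE'nn t ht
  have hwderiv : ∀ t ∈ Ioo (0:ℝ) T, HasDerivAt w (w' t) t := by
    intro t ht
    exact (hwd t (Ioo_subset_Icc_self ht)).hasDerivAt (Icc_mem_nhds ht.1 ht.2)
  -- the key step
  have key : 0 < w' 0 := by
    by_contra hkey
    have hg00 : w' 0 = 0 := le_antisymm (not_lt.1 hkey) (hgnn 0 h0T)
    rcases hcase with hcase1 | hcase2
    · -- f ≡ 0 near 0 : E is constant, zero; w is constant; contradiction with w T = η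
      have hfw0 : ∀ t ∈ Icc (0:ℝ) T, f (w t) = 0 := by
        intro t ht
        rcases eq_or_lt_of_le (hwnn t ht) with h | h
        · rw [← h]
          have : f 0 ≤ 0 :=
            aux_lim_le hfc.continuousAt.continuousWithinAt hη₀
              (fun u hu hu' => le_of_eq (hcase1 u ⟨hu, hu'⟩))
          exact le_antisymm this hf0nn
        · exact hcase1 _ ⟨h, lt_of_le_of_lt (hwle t ht) hηη₀⟩
      have hEanti : AntitoneOn E (Icc 0 T) := by
        refine antitoneOn_of_deriv_nonpos (convex_Icc 0 T) hEc ?_ ?_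
        · intro t ht
          rw [interior_Icc] at ht
          exact (hEd t ht).differentiableAt.differentiableWithinAt
        · intro t ht
          rw [interior_Icc] at ht
          rw [(hEd t ht).deriv, hfw0 t (Ioo_subset_Icc_self ht)]
          ring_nf
          exact le_of_eq (by ring)
      have hE00 : E 0 = 0 := by
        simp only [hEdef, hg00, hφ0, mul_zero]
      have hEzero : ∀ t ∈ Icc (0:ℝ) T, E t = 0 := by
        intro t ht
        have h1 := hEmono h0T ht ht.1
        have h2 := hEanti h0T ht ht.1
        rw [hE00] at h1 h2
        exact le_antisymm h2 h1
      have hgzero : ∀ t ∈ Icc (0:ℝ) T, w' t = 0 := by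
        intro t ht
        have := hEzero t ht
        have hφz : φ (w' t) = 0 := by
          have hp := (hppos t ht).ne'
          have h2 : p t * φ (w' t) = 0 := this
          exact (mul_eq_zero.1 h2).resolve_left hp
        exact hφzero _ (hgnn t ht) hφz
      have hwanti : AntitoneOn w (Icc 0 T) := by
        refine antitoneOn_of_deriv_nonpos (convex_Icc 0 T) hwc ?_ ?_
        · intro t ht
          rw [interior_Icc] at ht
          exact (hwderiv t ht).differentiableAt.differentiableWithinAt
        · intro t ht
          rw [interior_Icc] at ht
          rw [(hwderiv t ht).deriv, hgzero t (Ioo_subset_Icc_self ht)]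
      have : w T ≤ w 0 := hwanti h0T hTT hT0
      rw [hw0, hwT] at this
      exact absurd (lt_of_lt_of_le hη0 this) (lt_irrefl 0)
    · obtain ⟨hfpos, hξ₀, hlCinc, hKO⟩ := hcase2
      have hCpos : (0:ℝ) < C := lt_of_lt_of_le one_pos hC
      -- F facts
      have hfInt : ∀ x y : ℝ, IntervalIntegrable f volume x y :=
        fun x y => hfc.intervalIntegrable x y
      have hFeq : F = fun u => ∫ s in (0:ℝ)..u, f s := funext hF
      have hFd : ∀ x : ℝ, HasDerivAt F (f x) x := by
        intro x
        rw [hFeq]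
        exact intervalIntegral.integral_hasDerivAt_right (hfInt 0 x)
          hfc.aestronglyMeasurable.stronglyMeasurableAtFilter hfc.continuousAt
      have hFc : Continuous F := continuous_iff_continuousAt.2 (fun x => (hFd x).continuousAt)
      have hF0 : F 0 = 0 := by rw [hF]; exact intervalIntegral.integral_same
      have hFmono : ∀ x y : ℝ, 0 ≤ x → x ≤ y → y < η₀ → F x ≤ F y := by
        intro x y hx hxy hy
        have h1 : F y - F x = ∫ s in x..y, f s := by
          rw [hF, hF, ← intervalIntegral.integral_interval_sub_left (hfInt 0 y) (hfInt 0 x)]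
        have h2 : 0 ≤ ∫ s in x..y, f s := by
          apply intervalIntegral.integral_nonneg hxy
          intro u hu
          rcases eq_or_lt_of_le (hx.trans hu.1) with h | h
          · rw [← h]; exact hf0nn
          · exact hfnn u ⟨h, lt_of_le_of_lt hu.2 hy⟩
        linarith only [h1, h2]
      have hFpos : ∀ s : ℝ, 0 < s → s < η₀ → 0 < F s := by
        intro s hs hsη
        rw [hF]
        exact intervalIntegral.intervalIntegral_pos_of_pos_on (hfInt 0 s)
          (fun x hx => hfpos x ⟨hx.1, hx.2.trans hsη⟩) hs
      have hFnn : ∀ s : ℝ, 0 ≤ s → s < η₀ → 0 ≤ F s := by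
        intro s hs hsη
        have := hFmono 0 s le_rfl hs hsη
        rwa [hF0] at this
      -- K facts
      have hKIcc : IntegrableOn (fun s => s * φ' s / l s) (Icc 0 1) := by
        exact hint.congr_set_ae (MeasureTheory.Ioo_ae_eq_Icc).symm
      have hKII : ∀ y ∈ Icc (0:ℝ) 1, IntervalIntegrable (fun s => s * φ' s / l s) volume 0 y := by
        intro y hy
        rw [intervalIntegrable_iff_integrableOn_Icc_of_le hy.1]
        exact hKIcc.mono_set (Icc_subset_Icc le_rfl hy.2)
      have hKeq : K = fun u => ∫ s in (0:ℝ)..u, s * φ' s / l s := funext hK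
      have hK0 : K 0 = 0 := by rw [hK]; exact intervalIntegral.integral_same
      have hKcont : ContinuousOn K (Icc 0 1) := by
        rw [hKeq]
        have h := intervalIntegral.continuousOn_primitive_interval
          (a := 0) (b := 1) (μ := volume) (f := fun s => s * φ' s / l s)
          (by rwa [uIcc_of_le zero_le_one])
        rwa [uIcc_of_le zero_le_one] at h
      have hKd : ∀ x : ℝ, 0 < x → x < 1 → HasDerivAt K (x * φ' x / l x) x := by
        intro x hx hx1
        have hlx : ContinuousAt l x :=
          hlc.continuousAt (Filter.mem_of_superset (Ioi_mem_nhds hx) Ioi_subset_Ici_self)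
        have hcont : ContinuousAt (fun s => s * φ' s / l s) x :=
          ((continuousAt_id.mul (hφ'c.continuousAt (Ioi_mem_nhds hx))).div hlx (hlpos x hx).ne')
        have hmeas : StronglyMeasurableAtFilter (fun s => s * φ' s / l s) (𝓝 x) :=
          ⟨Ioi 0, Ioi_mem_nhds hx,
            (((continuousOn_id.mul hφ'c).div (hlc.mono Ioi_subset_Ici_self)
              (fun u hu => (hlpos u hu).ne')).aestronglyMeasurable measurableSet_Ioi)⟩
        rw [hKeq]
        exact intervalIntegral.integral_hasDerivAt_right (hKII x ⟨hx.le, hx1.le⟩) hmeas hcont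
      have hKSM : StrictMonoOn K (Icc 0 1) := by
        refine strictMonoOn_of_deriv_pos (convex_Icc 0 1) hKcont ?_
        intro x hx
        rw [interior_Icc] at hx
        rw [(hKd x hx.1 hx.2).deriv]
        exact div_pos (mul_pos hx.1 (hφ'pos x hx.1)) (hlpos x hx.1)
      have hK1pos : 0 < K 1 := by
        rw [← hK0]
        exact hKSM (left_mem_Icc.2 zero_le_one) (right_mem_Icc.2 zero_le_one) one_pos
      obtain ⟨ki, hkiMono, hkiLeft, hkiRight⟩ := aux_kinv K hKcont hKSM hK0
      have hkipos : ∀ y : ℝ, 0 < y → y ≤ K 1 → 0 < ki y := by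
        intro y hy hy1
        obtain ⟨hmm, hKk⟩ := hkiRight y hy.le hy1
        rcases eq_or_lt_of_le hmm.1 with hh | hh
        · exfalso
          rw [← hh, hK0] at hKk
          rw [← hKk] at hy
          exact lt_irrefl 0 hy
        · exact hh
      -- constants
      obtain ⟨tA, htA, hA⟩ := isCompact_Icc.exists_isMaxOn ⟨0, h0T⟩ hac
      set A := a tA with hAdef
      have hApos : 0 < A := hapos tA htA
      obtain ⟨tM, htM, hM⟩ := isCompact_Icc.exists_isMaxOn ⟨0, h0T⟩ hpc
      set M := p tM with hMdef
      have hMpos : 0 < M := hppos tM htM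
      obtain ⟨tm, htm, hm⟩ := isCompact_Icc.exists_isMinOn ⟨0, h0T⟩ hpc
      set m := p tm with hmdef
      have hmpos : 0 < m := hppos tm htm
      obtain ⟨tB, htB, hB⟩ := isCompact_Icc.exists_isMaxOn ⟨0, h0T⟩ hp'c.abs
      set B := |p' tB| with hBdef
      have hBnn : 0 ≤ B := abs_nonneg _
      have hX0 : 0 ≤ B * T * M * A * C^2 / m^2 := by positivity
      set D : ℝ := A + B * T * M * A * C^2 / m^2 + 1 with hDdef
      have hD1 : 1 ≤ D := by rw [hDdef]; linarith only [hApos, hX0]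
      have hDpos : 0 < D := lt_of_lt_of_le one_pos hD1
      have hAD : A ≤ D := by rw [hDdef]; linarith only [hX0]
      -- strict monotonicity of φ
      have hφSM : StrictMonoOn φ (Ici 0) := by
        refine strictMonoOn_of_deriv_pos (convex_Ici 0) hφc ?_
        intro x hx
        rw [interior_Ici] at hx
        rw [(hφd x hx).deriv]
        exact hφ'pos x hx
      -- w monotone
      have hwMono : MonotoneOn w (Icc 0 T) := by
        refine monotoneOn_of_deriv_nonneg (convex_Icc 0 T) hwc ?_ ?_
        · intro t ht
          rw [interior_Icc] at ht
          exact (hwderiv t ht).differentiableAt.differentiableWithinAt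
        · intro t ht
          rw [interior_Icc] at ht
          rw [(hwderiv t ht).deriv]
          exact hgnn t (Ioo_subset_Icc_self ht)
      -- C-increasing up to 0
      have hfC : ∀ u x : ℝ, 0 ≤ u → u ≤ x → 0 < x → x < η₀ → f u ≤ C * f x := by
        intro u x hu hux hx hxη
        rcases eq_or_lt_of_le hu with h | h
        · rw [← h]
          refine aux_lim_le hfc.continuousAt.continuousWithinAt hx ?_
          intro v hv hvx
          exact hfCinc v ⟨hv, hvx.trans hxη⟩ x ⟨hx, hxη⟩ hvx.le
        · exact hfCinc u ⟨h, lt_of_le_of_lt hux hxη⟩ x ⟨hx, hxη⟩ hux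
      have hlC : ∀ u x : ℝ, 0 ≤ u → u ≤ x → 0 < x → x < ξ₀ → l u ≤ C * l x := by
        intro u x hu hux hx hxξ
        rcases eq_or_lt_of_le hu with h | h
        · rw [← h]
          refine aux_lim_le (hlc 0 self_mem_Ici) hx ?_
          intro v hv hvx
          exact hlCinc v ⟨hv, hvx.trans hxξ⟩ x ⟨hx, hxξ⟩ hvx.le
        · exact hlCinc u ⟨h, lt_of_le_of_lt hux hxξ⟩ x ⟨hx, hxξ⟩ hux
      -- w' monotone when p' ≤ 0
      have hgmono : (∀ t ∈ Icc (0:ℝ) T, p' t ≤ 0) →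
          ∀ s t : ℝ, s ∈ Icc (0:ℝ) T → t ∈ Icc (0:ℝ) T → s ≤ t → w' s ≤ w' t := by
        intro hp' s t hs ht hst
        have hpanti : AntitoneOn p (Icc 0 T) := by
          refine antitoneOn_of_deriv_nonpos (convex_Icc 0 T) hpc ?_ ?_
          · intro x hx
            rw [interior_Icc] at hx
            exact ((hpd x (Ioo_subset_Icc_self hx)).hasDerivAt
              (Icc_mem_nhds hx.1 hx.2)).differentiableAt.differentiableWithinAt
          · intro x hx
            rw [interior_Icc] at hx
            rw [((hpd x (Ioo_subset_Icc_self hx)).hasDerivAt (Icc_mem_nhds hx.1 hx.2)).deriv]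
            exact hp' x (Ioo_subset_Icc_self hx)
        have h1 : E s ≤ E t := hEmono hs ht hst
        have h2 : p t ≤ p s := hpanti hs ht hst
        have hps := hppos s hs
        have hpt := hppos t ht
        have h3 : φ (w' s) ≤ φ (w' t) := by
          have h4 : p t * φ (w' s) ≤ p s * φ (w' s) :=
            mul_le_mul_of_nonneg_right h2 (hφnn _ (hgnn s hs))
          have h5 : p s * φ (w' s) ≤ p t * φ (w' t) := h1
          have h6 : p t * φ (w' s) ≤ p t * φ (w' t) := h4.trans h5
          exact le_of_mul_le_mul_left h6 hpt
        by_contra hlt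
        push_neg at hlt
        have h7 := hφSM (hgnn t ht) (hgnn s hs) hlt
        linarith only [h3, h7]
      -- t₀ : the last zero of w
      set Z0 := {t | t ∈ Icc (0:ℝ) T ∧ w t = 0} with hZ0
      have hZ0ne : Z0.Nonempty := ⟨0, h0T, hw0⟩
      have hZ0bdd : BddAbove Z0 := bddAbove_Icc.mono (fun t ht => ht.1)
      have hZ0closed : IsClosed Z0 := by
        have h : Z0 = Icc 0 T ∩ w ⁻¹' {0} := rfl
        rw [h]
        exact hwc.preimage_isClosed_of_isClosed isClosed_Icc isClosed_singleton
      set t₀ := sSup Z0 with ht₀def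
      have ht₀mem : t₀ ∈ Z0 := hZ0closed.csSup_mem hZ0ne hZ0bdd
      have ht₀Icc : t₀ ∈ Icc (0:ℝ) T := ht₀mem.1
      have hwt₀ : w t₀ = 0 := ht₀mem.2
      have ht₀T : t₀ < T := by
        rcases eq_or_lt_of_le ht₀Icc.2 with h | h
        · exfalso
          rw [h, hwT] at hwt₀
          exact absurd hwt₀ (ne_of_gt hη0)
        · exact h
      have hwpos' : ∀ t : ℝ, t₀ < t → t ≤ T → 0 < w t := by
        intro t htt₀ htT
        have htIcc : t ∈ Icc (0:ℝ) T := ⟨ht₀Icc.1.trans htt₀.le, htT⟩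
        rcases eq_or_lt_of_le (hwnn t htIcc) with h | h
        · exfalso
          have : t ∈ Z0 := ⟨htIcc, h.symm⟩
          exact absurd (le_csSup hZ0bdd this) (not_le.2 htt₀)
        · exact h
      have hgt₀ : w' t₀ = 0 := by
        rcases eq_or_lt_of_le ht₀Icc.1 with h | h
        · rw [← h]; exact hg00
        · refine aux_deriv_zero_of_const (c := 0) h (right_mem_Icc.2 h.le)
            (Icc_subset_Icc le_rfl ht₀Icc.2) (hwd t₀ ht₀Icc) ?_
          intro u hu
          have huIcc : u ∈ Icc (0:ℝ) T := ⟨hu.1, hu.2.trans ht₀Icc.2⟩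
          have h1 : w u ≤ w t₀ := hwMono huIcc ht₀Icc hu.2
          rw [hwt₀] at h1
          exact le_antisymm h1 (hwnn u huIcc)
      have hEt₀ : E t₀ = 0 := by
        have h : E t₀ = p t₀ * φ (w' t₀) := rfl
        rw [h, hgt₀, hφ0, mul_zero]
      -- choice of t₁
      set ξ : ℝ := min ξ₀ 1 with hξdef
      have hξpos : 0 < ξ := lt_min hξ₀ one_pos
      set δ0 : ℝ := min ξ (K 1) with hδ0def
      have hδ0pos : 0 < δ0 := lt_min hξpos hK1pos
      set G0 : ℝ → ℝ := fun t => max (w' t) (D * F (w t)) with hG0def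
      have hG0c : ContinuousWithinAt G0 (Icc 0 T) t₀ :=
        ((hw'c t₀ ht₀Icc).max ((continuousOn_const.mul (hFc.comp_continuousOn hwc)) t₀ ht₀Icc))
      have hG0t₀ : G0 t₀ = 0 := by
        have h : G0 t₀ = max (w' t₀) (D * F (w t₀)) := rfl
        rw [h, hgt₀, hwt₀, hF0, mul_zero, max_self]
      have hev : G0 ⁻¹' (Iio δ0) ∈ 𝓝[Icc (0:ℝ) T] t₀ := by
        apply hG0c
        rw [hG0t₀]
        exact Iio_mem_nhds hδ0pos
      rw [Metric.mem_nhdsWithin_iff] at hev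
      obtain ⟨ε, hεpos, hεsub⟩ := hev
      set t₁ : ℝ := min (t₀ + ε/2) ((t₀ + T)/2) with ht₁def
      have ht₀t₁ : t₀ < t₁ := lt_min (by linarith only [hεpos]) (by linarith only [ht₀T])
      have ht₁T : t₁ < T := lt_of_le_of_lt (min_le_right _ _) (by linarith only [ht₀T])
      have ht₁Icc : t₁ ∈ Icc (0:ℝ) T := ⟨ht₀Icc.1.trans ht₀t₁.le, ht₁T.le⟩
      have hIccsub01 : Icc t₀ t₁ ⊆ Icc (0:ℝ) T := Icc_subset_Icc ht₀Icc.1 ht₁T.le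
      have hsmall : ∀ t ∈ Icc t₀ t₁, w' t < ξ ∧ D * F (w t) < K 1 := by
        intro t ht
        have htIcc : t ∈ Icc (0:ℝ) T := hIccsub01 ht
        have hball : t ∈ Metric.ball t₀ ε := by
          rw [Metric.mem_ball, Real.dist_eq, abs_of_nonneg (by linarith only [ht.1])]
          have h1 : t ≤ t₀ + ε/2 := le_trans ht.2 (min_le_left _ _)
          linarith only [h1, hεpos]
        have hmem := hεsub ⟨hball, htIcc⟩
        have hlt : G0 t < δ0 := hmem
        constructor
        · exact lt_of_le_of_lt (le_max_left _ _)
            (lt_of_lt_of_le hlt (min_le_left _ _))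
        · exact lt_of_le_of_lt (le_max_right _ _)
            (lt_of_lt_of_le hlt (min_le_right _ _))
      -- integral representation of E
      have hEint : ∀ t : ℝ, t₀ < t → t ≤ t₁ →
          E t = ∫ σ in t₀..t, p σ * a σ * f (w σ) * l (w' σ) := by
        intro t htt₀ htt₁
        have htT : t ≤ T := htt₁.trans ht₁T.le
        have hIcc : Icc t₀ t ⊆ Icc (0:ℝ) T := Icc_subset_Icc ht₀Icc.1 htT
        have hcont : ContinuousOn E (Icc t₀ t) := hEc.mono hIcc
        have hderiv : ∀ s ∈ Ioo t₀ t,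
            HasDerivWithinAt E (p s * a s * f (w s) * l (w' s)) (Ioi s) s := by
          intro s hs
          exact (hEd s ⟨lt_of_le_of_lt ht₀Icc.1 hs.1,
            lt_of_lt_of_le hs.2 htT⟩).hasDerivWithinAt
        have hcint : ContinuousOn (fun σ => p σ * a σ * f (w σ) * l (w' σ)) (Icc t₀ t) :=
          (((hpc.mono hIcc).mul (hac.mono hIcc)).mul
            (hfc.comp_continuousOn (hwc.mono hIcc))).mul
            ((hlc.comp (hw'c.mono hIcc)) (fun σ hσ => hgnn σ (hIcc hσ)))
        have hint' : IntervalIntegrable (fun σ => p σ * a σ * f (w σ) * l (w' σ))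
            volume t₀ t := by
          rw [intervalIntegrable_iff_integrableOn_Icc_of_le htt₀.le]
          exact hcint.integrableOn_compact isCompact_Icc
        have h := intervalIntegral.integral_eq_sub_of_hasDeriv_right_of_le htt₀.le
          hcont hderiv hint'
        rw [hEt₀, sub_zero] at h
        exact h.symm
      -- the key derivative bound
      have hKg : ∀ s : ℝ, t₀ < s → s < t₁ → 0 < w' s →
          ∃ ks, HasDerivAt (fun τ => K (w' τ)) ks s ∧ ks ≤ D * (f (w s) * w' s) := by
        intro s hs₀ hs₁ hgs
        have hsIcc : s ∈ Icc (0:ℝ) T := ⟨ht₀Icc.1.trans hs₀.le, (hs₁.trans ht₁T).le⟩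
        have hsIoo : s ∈ Ioo (0:ℝ) T := ⟨lt_of_le_of_lt ht₀Icc.1 hs₀, hs₁.trans ht₁T⟩
        have hsIcc01 : s ∈ Icc t₀ t₁ := ⟨hs₀.le, hs₁.le⟩
        have hgsξ : w' s < ξ := (hsmall s hsIcc01).1
        have hgs1 : w' s < 1 := lt_of_lt_of_le hgsξ (min_le_right _ _)
        have hgsξ₀ : w' s < ξ₀ := lt_of_lt_of_le hgsξ (min_le_left _ _)
        have hps := hppos s hsIcc
        have hasp := hapos s hsIcc
        have hls := hlpos _ hgs
        have hfws := hfwnn s hsIcc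
        have hwspos : 0 < w s := hwpos' s hs₀ hsIcc.2
        have hwsη₀ : w s < η₀ := lt_of_le_of_lt (hwle s hsIcc) hηη₀
        have hpd' : HasDerivAt p (p' s) s := (hpd s hsIcc).hasDerivAt (Icc_mem_nhds hsIoo.1 hsIoo.2)
        have hEd' := hEd s hsIoo
        have hud : HasDerivAt (fun τ => φ (w' τ))
            ((p s * a s * f (w s) * l (w' s) * p s - E s * p' s) / (p s)^2) s := by
          have hdiv := hEd'.div hpd' hps.ne'
          refine hdiv.congr_of_eventuallyEq ?_
          filter_upwards [Icc_mem_nhds hsIoo.1 hsIoo.2] with τ hτ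
          have h : E τ = p τ * φ (w' τ) := rfl
          rw [Pi.div_apply, h, mul_div_cancel_left₀ _ (hppos τ hτ).ne']
        set u' : ℝ := (p s * a s * f (w s) * l (w' s) * p s - E s * p' s) / (p s)^2 with hu'def
        have hφev : ∀ᶠ y in 𝓝 (w' s), HasDerivAt φ (φ' y) y :=
          eventually_iff_exists_mem.mpr ⟨Ioi 0, Ioi_mem_nhds hgs, fun y hy => hφd y hy⟩
        have hφstrict : HasStrictDerivAt φ (φ' (w' s)) (w' s) :=
          hasStrictDerivAt_of_hasDerivAt_of_continuousAt hφev
            (hφ'c.continuousAt (Ioi_mem_nhds hgs))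
        have hφ'ne : φ' (w' s) ≠ 0 := (hφ'pos _ hgs).ne'
        have hψd : HasDerivAt (hφstrict.localInverse φ (φ' (w' s)) (w' s) hφ'ne)
            (φ' (w' s))⁻¹ (φ (w' s)) := (hφstrict.to_localInverse hφ'ne).hasDerivAt
        have hleft : ∀ᶠ x in 𝓝 (w' s),
            hφstrict.localInverse φ (φ' (w' s)) (w' s) hφ'ne (φ x) = x :=
          (hφstrict.hasStrictFDerivAt_equiv hφ'ne).eventually_left_inverse
        have hgc : ContinuousAt w' s := (hw'c s hsIcc).continuousAt (Icc_mem_nhds hsIoo.1 hsIoo.2)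
        have hgev : ∀ᶠ τ in 𝓝 s,
            hφstrict.localInverse φ (φ' (w' s)) (w' s) hφ'ne (φ (w' τ)) = w' τ :=
          hgc.tendsto.eventually hleft
        have hgd : HasDerivAt w' ((φ' (w' s))⁻¹ * u') s := by
          have hcomp : HasDerivAt
              (fun τ => hφstrict.localInverse φ (φ' (w' s)) (w' s) hφ'ne (φ (w' τ)))
              ((φ' (w' s))⁻¹ * u') s := hψd.comp s hud
          exact hcomp.congr_of_eventuallyEq (hgev.mono (fun τ hτ => hτ.symm))
        have hKds : HasDerivAt K (w' s * φ' (w' s) / l (w' s)) (w' s) := hKd _ hgs hgs1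
        have hcomp2 : HasDerivAt (fun τ => K (w' τ))
            (w' s * φ' (w' s) / l (w' s) * ((φ' (w' s))⁻¹ * u')) s := hKds.comp s hgd
        refine ⟨_, hcomp2, ?_⟩
        have hval : w' s * φ' (w' s) / l (w' s) * ((φ' (w' s))⁻¹ * u')
            = (w' s / l (w' s)) * u' := by
          field_simp
        rw [hval]
        have hu'eq : u' = a s * f (w s) * l (w' s) - φ (w' s) * (p' s / p s) := by
          rw [hu'def]
          have h : E s = p s * φ (w' s) := rfl
          rw [h]
          field_simp
        rw [hu'eq]
        have hterm1eq : (w' s / l (w' s)) * (a s * f (w s) * l (w' s) - φ (w' s) * (p' s / p s))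
            = a s * (f (w s) * w' s) + (w' s / l (w' s)) * (φ (w' s) * (-(p' s) / p s)) := by
          field_simp
          ring
        rw [hterm1eq]
        have hfw'nn : 0 ≤ f (w s) * w' s := mul_nonneg hfws hgs.le
        have h1 : a s * (f (w s) * w' s) ≤ A * (f (w s) * w' s) :=
          mul_le_mul_of_nonneg_right (hA hsIcc) hfw'nn
        rcases hpmono with hp' | hp'
        · -- p' ≥ 0
          have h2 : (w' s / l (w' s)) * (φ (w' s) * (-(p' s) / p s)) ≤ 0 := by
            apply mul_nonpos_of_nonneg_of_nonpos (div_nonneg hgs.le hls.le)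
            apply mul_nonpos_of_nonneg_of_nonpos (hφnn _ hgs.le)
            exact div_nonpos_of_nonpos_of_nonneg (neg_nonpos.2 (hp' s hsIcc)) hps.le
          have h3 : D * (f (w s) * w' s) = A * (f (w s) * w' s)
              + (B * T * M * A * C^2 / m^2) * (f (w s) * w' s) + (f (w s) * w' s) := by
            rw [hDdef]; ring
          linarith only [h1, h2, h3, mul_nonneg hX0 hfw'nn, hfw'nn]
        · -- p' ≤ 0
          have hp's := hp' s hsIcc
          have hgm := hgmono hp'
          -- bound E s
          have hEb : E s ≤ T * (M * A * (C * f (w s)) * (C * l (w' s))) := by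
            rw [hEint s hs₀ hs₁.le]
            have hptwise : ∀ σ ∈ Icc t₀ s,
                p σ * a σ * f (w σ) * l (w' σ) ≤ M * A * (C * f (w s)) * (C * l (w' s)) := by
              intro σ hσ
              have hσIcc : σ ∈ Icc (0:ℝ) T := ⟨ht₀Icc.1.trans hσ.1, hσ.2.trans hsIcc.2⟩
              have hf1 : f (w σ) ≤ C * f (w s) :=
                hfC (w σ) (w s) (hwnn σ hσIcc) (hwMono hσIcc hsIcc hσ.2) hwspos hwsη₀
              have hl1 : l (w' σ) ≤ C * l (w' s) :=
                hlC (w' σ) (w' s) (hgnn σ hσIcc) (hgm σ s hσIcc hsIcc hσ.2) hgs hgsξ₀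
              have hpa : p σ * a σ ≤ M * A :=
                mul_le_mul (hM hσIcc) (hA hσIcc) (hapos σ hσIcc).le hMpos.le
              have hstep : p σ * a σ * f (w σ) ≤ M * A * (C * f (w s)) :=
                mul_le_mul hpa hf1 (hfwnn σ hσIcc)
                  (mul_nonneg hMpos.le hApos.le)
              exact mul_le_mul hstep hl1 (hlnn _ (hgnn σ hσIcc))
                (by positivity)
            have hconst : IntervalIntegrable
                (fun _ : ℝ => M * A * (C * f (w s)) * (C * l (w' s))) volume t₀ s :=
              intervalIntegrable_const
            have hcint : ContinuousOn (fun σ => p σ * a σ * f (w σ) * l (w' σ))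
                (Icc t₀ s) := by
              have hIcc : Icc t₀ s ⊆ Icc (0:ℝ) T := Icc_subset_Icc ht₀Icc.1 hsIcc.2
              exact (((hpc.mono hIcc).mul (hac.mono hIcc)).mul
                (hfc.comp_continuousOn (hwc.mono hIcc))).mul
                ((hlc.comp (hw'c.mono hIcc)) (fun σ hσ => hgnn σ (hIcc hσ)))
            have hint2 : IntervalIntegrable (fun σ => p σ * a σ * f (w σ) * l (w' σ))
                volume t₀ s := by
              rw [intervalIntegrable_iff_integrableOn_Icc_of_le hs₀.le]
              exact hcint.integrableOn_compact isCompact_Icc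
            have hmono := intervalIntegral.integral_mono_on hs₀.le hint2 hconst hptwise
            rw [intervalIntegral.integral_const, smul_eq_mul] at hmono
            have hst : s - t₀ ≤ T := by
              linarith only [hsIcc.2, ht₀Icc.1]
            refine hmono.trans ?_
            apply mul_le_mul_of_nonneg_right hst
            have := hlnn _ hgs.le
            positivity
          have hφb : φ (w' s) * m ≤ T * M * A * C^2 * f (w s) * l (w' s) := by
            have h4 : φ (w' s) * m ≤ φ (w' s) * p s :=
              mul_le_mul_of_nonneg_left (hm hsIcc) (hφnn _ hgs.le)
            have h5 : φ (w' s) * p s = E s := by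
              have h : E s = p s * φ (w' s) := rfl
              rw [h]; ring
            have h6 : T * (M * A * (C * f (w s)) * (C * l (w' s)))
                = T * M * A * C^2 * f (w s) * l (w' s) := by ring
            calc φ (w' s) * m ≤ E s := by rw [← h5]; exact h4
              _ ≤ T * (M * A * (C * f (w s)) * (C * l (w' s))) := hEb
              _ = T * M * A * C^2 * f (w s) * l (w' s) := h6
          have hterm2 : (w' s / l (w' s)) * (φ (w' s) * (-(p' s) / p s))
              ≤ (B * T * M * A * C^2 / m^2) * (f (w s) * w' s) := by
            have hφdivl : φ (w' s) ≤ (T * M * A * C^2 / m * f (w s)) * l (w' s) := by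
              rw [div_mul_eq_mul_div, div_mul_eq_mul_div, le_div_iff₀ hmpos]
              exact hφb
            have hpp : -(p' s) / p s ≤ B / m := by
              have hb1 : -(p' s) ≤ B := (neg_le_abs (p' s)).trans (hB hsIcc)
              have hb2 : 0 ≤ -(p' s) := neg_nonneg.2 hp's
              calc -(p' s) / p s ≤ -(p' s) / m :=
                    div_le_div_of_nonneg_left hb2 hmpos (hm hsIcc)
                _ ≤ B / m := (div_le_div_iff_of_pos_right hmpos).2 hb1
            have hppnn : 0 ≤ -(p' s) / p s := div_nonneg (neg_nonneg.2 hp's) hps.le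
            have hlhs : (w' s / l (w' s)) * (φ (w' s) * (-(p' s) / p s))
                ≤ (w' s / l (w' s)) * (((T * M * A * C^2 / m * f (w s)) * l (w' s)) * (B / m)) := by
              apply mul_le_mul_of_nonneg_left _ (div_nonneg hgs.le hls.le)
              apply mul_le_mul hφdivl hpp hppnn
              positivity
            refine hlhs.trans (le_of_eq ?_)
            field_simp
          have h3 : D * (f (w s) * w' s) = A * (f (w s) * w' s)
              + (B * T * M * A * C^2 / m^2) * (f (w s) * w' s) + (f (w s) * w' s) := by
            rw [hDdef]; ring
          linarith only [h1, hterm2, h3, hfw'nn]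
      -- core inequality
      have hcore : ∀ t : ℝ, t₀ < t → t ≤ t₁ → K (w' t) ≤ D * F (w t) := by
        intro t ht₀t htt₁
        have htIcc : t ∈ Icc (0:ℝ) T := ⟨ht₀Icc.1.trans ht₀t.le, htt₁.trans ht₁T.le⟩
        have hFwt : 0 ≤ F (w t) := hFnn _ (hwnn t htIcc) (lt_of_le_of_lt (hwle t htIcc) hηη₀)
        rcases eq_or_lt_of_le (hgnn t htIcc) with h | h
        · rw [← h, hK0]
          exact mul_nonneg hDpos.le hFwt
        · set Zt := {s | s ∈ Icc t₀ t ∧ w' s = 0} with hZt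
          have hZtne : Zt.Nonempty := ⟨t₀, ⟨le_rfl, ht₀t.le⟩, hgt₀⟩
          have hZtbdd : BddAbove Zt := bddAbove_Icc.mono (fun s hs => hs.1)
          have hZtclosed : IsClosed Zt := by
            have hh : Zt = Icc t₀ t ∩ w' ⁻¹' {0} := rfl
            rw [hh]
            exact (hw'c.mono (Icc_subset_Icc ht₀Icc.1 htIcc.2)).preimage_isClosed_of_isClosed
              isClosed_Icc isClosed_singleton
          set α := sSup Zt with hαdef
          have hαmem : α ∈ Zt := hZtclosed.csSup_mem hZtne hZtbdd
          have hαIcc : α ∈ Icc t₀ t := hαmem.1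
          have hgα : w' α = 0 := hαmem.2
          have hαt : α < t := by
            rcases eq_or_lt_of_le hαIcc.2 with hh | hh
            · exfalso; rw [hh] at hgα; rw [hgα] at h; exact lt_irrefl 0 h
            · exact hh
          have hIccαt : Icc α t ⊆ Icc (0:ℝ) T :=
            Icc_subset_Icc (ht₀Icc.1.trans hαIcc.1) htIcc.2
          have hgpos'' : ∀ s : ℝ, α < s → s ≤ t → 0 < w' s := by
            intro s hαs hst
            have hsIcc : s ∈ Icc (0:ℝ) T := hIccαt ⟨hαs.le, hst⟩
            rcases eq_or_lt_of_le (hgnn s hsIcc) with hh | hh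
            · exfalso
              have hsmem : s ∈ Zt := ⟨⟨hαIcc.1.trans hαs.le, hst⟩, hh.symm⟩
              exact absurd (le_csSup hZtbdd hsmem) (not_le.2 hαs)
            · exact hh
          have hmapsTo : ∀ s ∈ Icc α t, w' s ∈ Icc (0:ℝ) 1 := by
            intro s hs
            have hsIcc := hIccαt hs
            refine ⟨hgnn s hsIcc, ?_⟩
            have hs01 : s ∈ Icc t₀ t₁ := ⟨hαIcc.1.trans hs.1, hs.2.trans htt₁⟩
            exact ((hsmall s hs01).1.le.trans (min_le_right ξ₀ 1))
          have hΦc : ContinuousOn (fun s => D * F (w s) - K (w' s)) (Icc α t) :=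
            (continuousOn_const.mul (hFc.comp_continuousOn (hwc.mono hIccαt))).sub
              (hKcont.comp (hw'c.mono hIccαt) hmapsTo)
          have hΦderiv : ∀ s ∈ Ioo α t,
              ∃ d, HasDerivAt (fun τ => D * F (w τ) - K (w' τ)) d s ∧ 0 ≤ d := by
            intro s hs
            have hs₀ : t₀ < s := lt_of_le_of_lt hαIcc.1 hs.1
            have hs₁ : s < t₁ := lt_of_lt_of_le hs.2 htt₁
            have hsIoo : s ∈ Ioo (0:ℝ) T := ⟨lt_of_le_of_lt ht₀Icc.1 hs₀, hs₁.trans ht₁T⟩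
            obtain ⟨ks, hks, hksle⟩ := hKg s hs₀ hs₁ (hgpos'' s hs.1 hs.2.le)
            have hFds : HasDerivAt (fun τ => D * F (w τ)) (D * (f (w s) * w' s)) s :=
              ((hFd (w s)).comp s (hwderiv s hsIoo)).const_mul D
            exact ⟨_, hFds.sub hks, by linarith only [hksle]⟩
          have hΦmono : MonotoneOn (fun s => D * F (w s) - K (w' s)) (Icc α t) := by
            refine monotoneOn_of_deriv_nonneg (convex_Icc α t) hΦc ?_ ?_
            · intro s hs
              rw [interior_Icc] at hs
              obtain ⟨d, hd, _⟩ := hΦderiv s hs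
              exact hd.differentiableAt.differentiableWithinAt
            · intro s hs
              rw [interior_Icc] at hs
              obtain ⟨d, hd, hdnn⟩ := hΦderiv s hs
              rw [hd.deriv]
              exact hdnn
          have h1 : D * F (w α) - K (w' α) ≤ D * F (w t) - K (w' t) :=
            hΦmono (left_mem_Icc.2 hαt.le) (right_mem_Icc.2 hαt.le) hαt.le
          rw [hgα, hK0, sub_zero] at h1
          have hFα : 0 ≤ F (w α) :=
            hFnn _ (hwnn α (hIccαt (left_mem_Icc.2 hαt.le)))
              (lt_of_le_of_lt (hwle α (hIccαt (left_mem_Icc.2 hαt.le))) hηη₀)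
          linarith only [h1, mul_nonneg hDpos.le hFα]
      -- set-up for measure argument
      set b := w t₁ with hbdef
      have hbpos : 0 < b := hwpos' t₁ ht₀t₁ ht₁T.le
      have hbη₀ : b < η₀ := lt_of_le_of_lt (hwle t₁ ht₁Icc) hηη₀
      have hDFb : D * F b < K 1 := (hsmall t₁ (right_mem_Icc.2 ht₀t₁.le)).2
      have hFble : F b ≤ D * F b := le_mul_of_one_le_left (hFnn b hbpos.le hbη₀) hD1
      obtain ⟨k, hk⟩ := pow_unbounded_of_one_lt D (show (1:ℝ) < 1 + 1/C by
        have h9 : 0 < 1/C := by positivity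
        linarith only [h9])
      set Λ : ℝ := 2^k with hΛdef
      have hΛ1 : (1:ℝ) ≤ Λ := one_le_pow₀ one_le_two
      have hΛpos : 0 < Λ := lt_of_lt_of_le one_pos hΛ1
      -- doubling of F
      have hdbl : ∀ σ : ℝ, 0 < σ → 2*σ < η₀ → (1 + 1/C) * F σ ≤ F (2*σ) := by
        intro σ hσ h2σ
        have hσηo : σ < η₀ := by linarith only [hσ, h2σ]
        have hlow : ∀ u ∈ Icc σ (2*σ), F σ / (C * σ) ≤ f u := by
          intro u hu
          have huη₀ : u < η₀ := lt_of_le_of_lt hu.2 h2σ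
          have hupos : 0 < u := lt_of_lt_of_le hσ hu.1
          have hFle : F σ ≤ σ * (C * f u) := by
            have h2 : ∫ v in (0:ℝ)..σ, f v ≤ ∫ v in (0:ℝ)..σ, C * f u :=
              intervalIntegral.integral_mono_on hσ.le (hfInt 0 σ) intervalIntegrable_const
                (fun v hv => hfC v u hv.1 (hv.2.trans hu.1) hupos huη₀)
            rw [intervalIntegral.integral_const, smul_eq_mul, sub_zero] at h2
            rw [hF]
            exact h2
          rw [div_le_iff₀ (by positivity)]
          have hre : σ * (C * f u) = f u * (C * σ) := by ring
          linarith only [hFle, hre]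
        have hmid : F σ / C ≤ F (2*σ) - F σ := by
          have h1 : F (2*σ) - F σ = ∫ v in σ..(2*σ), f v := by
            rw [hF, hF, ← intervalIntegral.integral_interval_sub_left (hfInt 0 (2*σ)) (hfInt 0 σ)]
          have h2 : ∫ _ in σ..(2*σ), (F σ / (C*σ)) ≤ ∫ v in σ..(2*σ), f v :=
            intervalIntegral.integral_mono_on (by linarith only [hσ]) intervalIntegrable_const
              (hfInt _ _) hlow
          rw [intervalIntegral.integral_const, smul_eq_mul] at h2
          have h3 : (2*σ - σ) * (F σ / (C*σ)) = F σ / C := by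
            field_simp
            ring
          rw [h3] at h2
          linarith only [h1, h2]
        have hiden : (1 + 1/C) * F σ = F σ + F σ / C := by
          field_simp
        linarith only [hmid, hiden]
      have hdblpow : ∀ (j : ℕ), ∀ σ : ℝ, 0 < σ → 2^j * σ < η₀ →
          (1 + 1/C)^j * F σ ≤ F (2^j * σ) := by
        intro j
        induction j with
        | zero => intro σ h1 h2; simp
        | succ n ih =>
          intro σ hσ hj
          have h2σ : (0:ℝ) < 2*σ := by linarith only [hσ]
          have hmle : (2:ℝ)^n * (2*σ) = 2^(n+1) * σ := by ring
          have hstep1 := ih (2*σ) h2σ (by rw [hmle]; exact hj)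
          have h2n : (2:ℝ) ≤ 2^(n+1) := le_self_pow₀ one_le_two (Nat.succ_ne_zero n)
          have h2ση : 2*σ < η₀ := by
            have h8 : 2*σ ≤ 2^(n+1) * σ := mul_le_mul_of_nonneg_right h2n hσ.le
            linarith only [h8, hj]
          have hstep2 := hdbl σ hσ h2ση
          calc (1 + 1/C)^(n+1) * F σ = (1 + 1/C)^n * ((1 + 1/C) * F σ) := by ring
            _ ≤ (1 + 1/C)^n * F (2*σ) := by
                apply mul_le_mul_of_nonneg_left hstep2
                positivity
            _ ≤ F (2^n * (2*σ)) := hstep1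
            _ = F (2^(n+1) * σ) := by rw [hmle]
      have hDF : ∀ s : ℝ, 0 < s → s < η₀ → D * F (s/Λ) ≤ F s := by
        intro s hs hsη
        have hσ : 0 < s/Λ := by positivity
        have heqs : (2:ℝ)^k * (s/Λ) = s := by
          rw [hΛdef]
          field_simp
        have h1 := hdblpow k (s/Λ) hσ (by rw [heqs]; exact hsη)
        rw [heqs] at h1
        refine le_trans ?_ h1
        apply mul_le_mul_of_nonneg_right hk.le
        exact hFnn _ hσ.le (lt_of_le_of_lt (div_le_self hs.le hΛ1) hsη)
      -- the sets S and Zs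
      set S := {t : ℝ | t ∈ Ioo t₀ t₁ ∧ 0 < w' t} with hSdef
      have hSsub : S ⊆ Icc (0:ℝ) T := fun x hx => hIccsub01 (Ioo_subset_Icc_self hx.1)
      have hSopen : IsOpen S := by
        have hh : S = Ioo t₀ t₁ ∩ w' ⁻¹' (Ioi 0) := rfl
        rw [hh]
        exact (hw'c.mono (fun x hx => hIccsub01 (Ioo_subset_Icc_self hx))).isOpen_inter_preimage
          isOpen_Ioo isOpen_Ioi
      have hSmeas : MeasurableSet S := hSopen.measurableSet
      have hSinj : InjOn w S := by
        have hclaim : ∀ x y : ℝ, x ∈ S → y ∈ S → x < y → w x = w y → False := by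
          intro x y hx hy hlt hxy
          have hxIcc := hSsub hx
          have hyIcc := hSsub hy
          have hconst : ∀ u ∈ Icc x y, w u = w x := by
            intro u hu
            have huIcc : u ∈ Icc (0:ℝ) T := ⟨hxIcc.1.trans hu.1, hu.2.trans hyIcc.2⟩
            have h1 : w x ≤ w u := hwMono hxIcc huIcc hu.1
            have h2 : w u ≤ w y := hwMono huIcc hyIcc hu.2
            rw [← hxy] at h2
            exact le_antisymm h2 h1
          have h0 := aux_deriv_zero_of_const hlt (left_mem_Icc.2 hlt.le)
            (Icc_subset_Icc hxIcc.1 hyIcc.2) (hwd x hxIcc) hconst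
          have h2 : (0:ℝ) < w' x := hx.2
          rw [h0] at h2
          exact lt_irrefl 0 h2
        intro x hx y hy hxy
        rcases lt_trichotomy x y with h | h | h
        · exact absurd (hclaim x y hx hy h hxy) not_false
        · exact h
        · exact absurd (hclaim y x hy hx h hxy.symm) not_false
      set Zs := {u : ℝ | u ∈ Icc t₀ t₁ ∧ w' u = 0} with hZsdef
      have hZnull : volume (w '' Zs) = 0 := by
        apply aux_image_null
        intro u hu
        have h1 := (hwd u (hIccsub01 hu.1)).mono
          (fun x (hx : x ∈ Zs) => hIccsub01 hx.1)
        rwa [hu.2] at h1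
      have hcover : Ioo 0 b ⊆ w '' S ∪ w '' Zs := by
        intro s hs
        obtain ⟨t, htmem, hwt⟩ := intermediate_value_Icc ht₀t₁.le (hwc.mono hIccsub01)
          (show s ∈ Icc (w t₀) (w t₁) from ⟨by rw [hwt₀]; exact hs.1.le, hs.2.le⟩)
        have htne₀ : t ≠ t₀ := by
          intro hh
          rw [hh, hwt₀] at hwt
          rw [← hwt] at hs
          exact lt_irrefl 0 hs.1
        have htne₁ : t ≠ t₁ := by
          intro hh
          rw [hh] at hwt
          have h2 : s < w t₁ := by rw [← hbdef]; exact hs.2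
          rw [hwt] at h2
          exact lt_irrefl s h2
        have htIoo : t ∈ Ioo t₀ t₁ :=
          ⟨lt_of_le_of_ne htmem.1 (Ne.symm htne₀), lt_of_le_of_ne htmem.2 htne₁⟩
        rcases eq_or_lt_of_le (hgnn t (hIccsub01 htmem)) with h | h
        · exact Or.inr ⟨t, ⟨htmem, h.symm⟩, hwt⟩
        · exact Or.inl ⟨t, ⟨htIoo, h⟩, hwt⟩
      set G : ℝ → ℝ≥0∞ := fun σ => ENNReal.ofReal (1 / ki (D * F σ)) with hGdef2
      have hkiMeas : Measurable ki := hkiMono.measurable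
      have hGmeas : Measurable G := by
        apply ENNReal.measurable_ofReal.comp
        exact measurable_const.div (hkiMeas.comp (hFc.measurable.const_mul D))
      have hptS : ∀ t ∈ S, ENNReal.ofReal |w' t| * G (w t) ≤ 1 := by
        intro t ht
        have htIoo := ht.1
        have htIcc : t ∈ Icc (0:ℝ) T := hSsub ht
        have hgt := ht.2
        have hKle := hcore t htIoo.1 htIoo.2.le
        have hg01 : w' t ∈ Icc (0:ℝ) 1 :=
          ⟨hgt.le, ((hsmall t (Ioo_subset_Icc_self htIoo)).1.le.trans (min_le_right ξ₀ 1))⟩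
        have h1 : w' t ≤ ki (D * F (w t)) := by
          have h2 := hkiMono hKle
          rwa [hkiLeft _ hg01] at h2
        have h2 : 0 < ki (D * F (w t)) := lt_of_lt_of_le hgt h1
        have hGw : G (w t) = ENNReal.ofReal (1 / ki (D * F (w t))) := rfl
        rw [hGw, abs_of_nonneg hgt.le, ← ENNReal.ofReal_mul hgt.le, ← ENNReal.ofReal_one]
        apply ENNReal.ofReal_le_ofReal
        rw [mul_one_div]
        exact (div_le_one h2).2 h1
      have hμS : volume S ≤ ENNReal.ofReal (t₁ - t₀) := by
        calc volume S ≤ volume (Ioo t₀ t₁) := measure_mono (fun x hx => hx.1)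
          _ = ENNReal.ofReal (t₁ - t₀) := Real.volume_Ioo
      have himg : ∫⁻ x in w '' S, G x = ∫⁻ t in S, ENNReal.ofReal |w' t| * G (w t) :=
        aux_lintegral_image hSmeas (fun t ht => (hwd t (hSsub ht)).mono hSsub) hSinj G
      have hIS : ∫⁻ x in w '' S, G x ≤ ENNReal.ofReal (t₁ - t₀) := by
        rw [himg]
        calc ∫⁻ t in S, ENNReal.ofReal |w' t| * G (w t)
            ≤ ∫⁻ _ in S, 1 := setLIntegral_mono' hSmeas hptS
          _ = volume S := by rw [setLIntegral_one]
          _ ≤ ENNReal.ofReal (t₁ - t₀) := hμS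
      have hGb : ∫⁻ σ in Ioo 0 b, G σ ≤ ENNReal.ofReal (t₁ - t₀) := by
        calc ∫⁻ σ in Ioo 0 b, G σ ≤ ∫⁻ σ in (w '' S ∪ w '' Zs), G σ :=
              lintegral_mono_set hcover
          _ ≤ (∫⁻ σ in w '' S, G σ) + ∫⁻ σ in w '' Zs, G σ := by
              refine le_trans (lintegral_mono' (Measure.restrict_union_le _ _) le_rfl) ?_
              rw [lintegral_add_measure]
          _ = ∫⁻ σ in w '' S, G σ := by
              rw [setLIntegral_measure_zero _ _ hZnull, add_zero]
          _ ≤ ENNReal.ofReal (t₁ - t₀) := hIS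
      -- conclude integrability of the KO integrand
      have hFsbound : ∀ s : ℝ, 0 < s → s < b → 0 ≤ F s ∧ F s ≤ K 1 := by
        intro s hs hsb
        have hsη₀ : s < η₀ := hsb.trans hbη₀
        refine ⟨hFnn s hs.le hsη₀, ?_⟩
        exact le_trans (le_trans (hFmono s b hs.le hsb.le hbη₀) hFble) hDFb.le
      have hKinveq : ∀ s : ℝ, 0 < s → s < b → Kinv (F s) = ki (F s) := by
        intro s hs hsb
        obtain ⟨hnn, hK1b⟩ := hFsbound s hs hsb
        obtain ⟨hkimem, hkiK⟩ := hkiRight (F s) hnn hK1b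
        rw [← hkiK, hKinv _ hkimem.1, hkiK]
      have hkiFpos : ∀ s : ℝ, 0 < s → s < b → 0 < ki (F s) := by
        intro s hs hsb
        obtain ⟨hnn, hK1b⟩ := hFsbound s hs hsb
        exact hkipos _ (hFpos s hs (hsb.trans hbη₀)) hK1b
      have htarget : IntegrableOn (fun s => 1 / Kinv (F s)) (Ioo 0 b) := by
        refine Integrable.congr (f := fun s => 1 / ki (F s)) ⟨?_, ?_⟩ ?_
        · exact (measurable_const.div (hkiMeas.comp hFc.measurable)).aestronglyMeasurable
        · rw [hasFiniteIntegral_iff_ofReal]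
          · calc ∫⁻ s in Ioo 0 b, ENNReal.ofReal (1 / ki (F s))
                ≤ ∫⁻ s in Ioo 0 b, G (s / Λ) := by
                  refine setLIntegral_mono' measurableSet_Ioo ?_
                  intro s hs
                  apply ENNReal.ofReal_le_ofReal
                  have hsη₀ : s < η₀ := hs.2.trans hbη₀
                  have h1 : D * F (s/Λ) ≤ F s := hDF s hs.1 hsη₀
                  have hσpos : 0 < s/Λ := div_pos hs.1 hΛpos
                  have hσb : s/Λ < b := lt_of_le_of_lt (div_le_self hs.1.le hΛ1) hs.2
                  have hDF0 : 0 < D * F (s/Λ) :=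
                    mul_pos hDpos (hFpos _ hσpos (hσb.trans hbη₀))
                  have hDFK1 : D * F (s/Λ) ≤ K 1 := by
                    have hFs : F (s/Λ) ≤ F b :=
                      hFmono _ _ hσpos.le hσb.le hbη₀
                    calc D * F (s/Λ) ≤ D * F b :=
                          mul_le_mul_of_nonneg_left hFs hDpos.le
                      _ ≤ K 1 := hDFb.le
                  have h2 : 0 < ki (D * F (s/Λ)) := hkipos _ hDF0 hDFK1
                  exact one_div_le_one_div_of_le h2 (hkiMono h1)
              _ = ENNReal.ofReal Λ * ∫⁻ y in Ioo 0 (b/Λ), G y := by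
                  have himage : (fun y : ℝ => Λ * y) '' Ioo 0 (b/Λ) = Ioo 0 b := by
                    ext z
                    simp only [mem_image, mem_Ioo]
                    constructor
                    · rintro ⟨y, ⟨hy0, hyb⟩, rfl⟩
                      refine ⟨mul_pos hΛpos hy0, ?_⟩
                      calc Λ * y < Λ * (b/Λ) := mul_lt_mul_of_pos_left hyb hΛpos
                        _ = b := by field_simp
                    · rintro ⟨hz0, hzb⟩
                      exact ⟨z/Λ, ⟨div_pos hz0 hΛpos, (div_lt_div_iff_of_pos_right hΛpos).2 hzb⟩,
                        by field_simp⟩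
                  have hcv := aux_lintegral_image (s := Ioo 0 (b/Λ))
                    (w := fun y => Λ * y) (g := fun _ => Λ) measurableSet_Ioo
                    (fun y _ => (by simpa using ((hasDerivAt_id y).const_mul Λ).hasDerivWithinAt :
                      HasDerivWithinAt (fun y => Λ * y) Λ (Ioo 0 (b/Λ)) y))
                    (fun y _ z _ hyz => mul_left_cancel₀ hΛpos.ne' hyz)
                    (fun σ => G (σ / Λ))
                  rw [himage] at hcv
                  rw [hcv, ← lintegral_const_mul' (ENNReal.ofReal Λ) _ ENNReal.ofReal_ne_top]
                  refine setLIntegral_congr_fun measurableSet_Ioo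
                    (fun y _ => ?_)
                  rw [abs_of_pos hΛpos, mul_div_cancel_left₀ _ hΛpos.ne']
              _ ≤ ENNReal.ofReal Λ * ∫⁻ y in Ioo 0 b, G y := by
                  apply mul_le_mul_right
                  apply lintegral_mono_set
                  exact Ioo_subset_Ioo le_rfl (div_le_self hbpos.le hΛ1)
              _ ≤ ENNReal.ofReal Λ * ENNReal.ofReal (t₁ - t₀) := mul_le_mul_right hGb _
              _ < ⊤ := ENNReal.mul_lt_top ENNReal.ofReal_lt_top ENNReal.ofReal_lt_top
          · refine (ae_restrict_iff' measurableSet_Ioo).2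
              (Eventually.of_forall (fun s hs => ?_))
            exact le_of_lt (one_div_pos.2 (hkiFpos s hs.1 hs.2))
        · refine (ae_restrict_iff' measurableSet_Ioo).2
            (Eventually.of_forall (fun s hs => ?_))
          show 1 / ki (F s) = 1 / Kinv (F s)
          rw [hKinveq s hs.1 hs.2]
      exact hKO b ⟨hbpos, hbη₀⟩ htarget

  -- conclusions
  have hE0pos : 0 < E 0 := mul_pos (hppos 0 h0T) (hφpos _ key)
  have hgpos : ∀ t ∈ Icc (0:ℝ) T, 0 < w' t := by
    intro t ht
    rcases eq_or_lt_of_le (hgnn t ht) with h | h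
    · exfalso
      have hEt0 : E t = 0 := by
        simp only [hEdef, ← h, hφ0, mul_zero]
      have h2 := hEmono h0T ht ht.1
      rw [hEt0] at h2
      exact absurd (lt_of_lt_of_le hE0pos h2) (lt_irrefl 0)
    · exact h
  have hwSM : StrictMonoOn w (Icc 0 T) := by
    refine strictMonoOn_of_deriv_pos (convex_Icc 0 T) hwc ?_
    intro t ht
    rw [interior_Icc] at ht
    rw [(hwderiv t ht).deriv]
    exact hgpos t (Ioo_subset_Icc_self ht)
  refine ⟨key, ?_, hgpos⟩
  intro t ht
  have := hwSM h0T ⟨ht.1.le, ht.2⟩ ht.1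
  rwa [hw0] at this
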